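/- Let G be a 2-edge-connected multigraph and H a proper induced subgraph of G. Let k be the number of edges of G adjacent to H but not contained in H. Then #l(H^Br) ≤ k. -/

import Mathlib

/-- A finite multigraph: loops and parallel edges allowed. -/
structure Multigraph where
  V : Type
  E : Type
  finV : Finite V
  finE : Finite E
  src : E → V
  tgt : E → V

namespace Multigraph

attribute [instance] Multigraph.finV Multigraph.finE

variable (G : Multigraph)

/-- Adjacency using only edges in `S`. -/
def Adj (S : Set G.E) (u v : G.V) : Prop :=
  ∃ e ∈ S, (G.src e = u ∧ G.tgt e = v) ∨ (G.src e = v ∧ G.tgt e = u)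

/-- Reachability using only edges in `S`. -/
def ReachOn (S : Set G.E) : G.V → G.V → Prop :=
  Relation.ReflTransGen (G.Adj S)

/-- Reachability in `G`. -/
def Reach : G.V → G.V → Prop := G.ReachOn Set.univ

def Connected : Prop := Nonempty G.V ∧ ∀ u v : G.V, G.Reach u v

/-- An edge is a bridge iff its removal disconnects its endpoints. -/
def IsBridge (e : G.E) : Prop := ¬ G.ReachOn {f | f ≠ e} (G.src e) (G.tgt e)

def TwoEdgeConnected : Prop := G.Connected ∧ ∀ e : G.E, ¬ G.IsBridge e

/-- The graph `G^Br` obtained by contracting all non-bridge edges: its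
vertices are the 2-edge-connected components of `G`, its edges the bridges. -/
def Br : Multigraph where
  V := Quot (G.ReachOn {e | ¬ G.IsBridge e})
  E := {e : G.E // G.IsBridge e}
  finV := Finite.of_surjective _ Quot.exists_rep
  finE := Subtype.finite
  src e := Quot.mk _ (G.src e.1)
  tgt e := Quot.mk _ (G.tgt e.1)

/-- Number of edges adjacent to a vertex (loops counted once; used only
for forests, which have no loops). -/
noncomputable def degAt (v : G.V) : ℕ := {e : G.E | G.src e = v ∨ G.tgt e = v}.ncard

/-- Leaf count of a forest, with the convention that an isolated vertex
(a single-vertex tree) counts as `2` leaves. -/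
noncomputable def numLeaves : ℕ :=
  2 * {v : G.V | G.degAt v = 0}.ncard + {v : G.V | G.degAt v = 1}.ncard

/-- The induced subgraph on a set of vertices. -/
def induce (W : Set G.V) : Multigraph where
  V := W
  E := {e : G.E // G.src e ∈ W ∧ G.tgt e ∈ W}
  finV := Subtype.finite
  finE := Subtype.finite
  src e := ⟨G.src e.1, e.2.1⟩
  tgt e := ⟨G.tgt e.1, e.2.2⟩

/-- Deletion of an edge. -/
def deleteEdge (e : G.E) : Multigraph where
  V := G.V
  E := {f : G.E // f ≠ e}
  finV := G.finV
  finE := Subtype.finite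
  src f := G.src f.1
  tgt f := G.tgt f.1

/-- Valence of a vertex, loops counted twice. -/
noncomputable def valence (v : G.V) : ℕ :=
  {e : G.E | G.src e = v}.ncard + {e : G.E | G.tgt e = v}.ncard

/-- Number of edges joining `w` to the set `S` (for `w ∉ S`). -/
noncomputable def edgesTo (w : G.V) (S : Set G.V) : ℕ :=
  {e : G.E | (G.src e = w ∧ G.tgt e ∈ S) ∨ (G.tgt e = w ∧ G.src e ∈ S)}.ncard

/-- The Dhar subgraph `Dh(v, d)`: the smallest set of vertices containing `v`
that is closed under adding a vertex `w` whenever `d w` is smaller than the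
number of edges joining `w` to the set. -/
def dhar (d : G.V → ℤ) (v : G.V) : Set G.V :=
  ⋂₀ {S : Set G.V | v ∈ S ∧ ∀ w ∉ S, (G.edgesTo w S : ℤ) ≤ d w}

end Multigraph

/-- A vertex-weighted finite multigraph. -/
structure WGraph extends Multigraph where
  weight : V → ℕ

namespace WGraph

variable (G : WGraph)

/-- The genus `1 - |V| + |E| + Σ_v g_v`. -/
noncomputable def genus : ℤ :=
  1 - (Nat.card G.V : ℤ) + Nat.card G.E + ∑ᶠ v : G.V, (G.weight v : ℤ)

def Semistable : Prop := ∀ v : G.V, G.weight v = 0 → 2 ≤ G.toMultigraph.valence v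

def Stable : Prop := ∀ v : G.V,
  (G.weight v = 0 → 3 ≤ G.toMultigraph.valence v) ∧
  (G.weight v = 1 → 1 ≤ G.toMultigraph.valence v)

/-- Induced weighted subgraph. -/
def induce (W : Set G.V) : WGraph :=
  { G.toMultigraph.induce W with weight := fun v => G.weight v.1 }

/-- The genus of the induced subgraph on `W`:
`|E(W)| - |W| + c(W) + Σ_{v ∈ W} g_v`. -/
noncomputable def genusOf (W : Set G.V) : ℤ :=
  (Nat.card (G.toMultigraph.induce W).E : ℤ) - Nat.card W
    + Nat.card (Quot (G.toMultigraph.induce W).Reach)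
    + ∑ᶠ v ∈ W, (G.weight v : ℤ)

end WGraph


namespace Multigraph
variable (G : Multigraph)

lemma adj_symm (S : Set G.E) : Symmetric (G.Adj S) := by
  rintro u v ⟨e, he, h⟩
  exact ⟨e, he, h.symm⟩

lemma reachOn_symm {S : Set G.E} {u v : G.V} (h : G.ReachOn S u v) : G.ReachOn S v u :=
  by
    unfold ReachOn at h ⊢
    induction h with
    | refl => exact Relation.ReflTransGen.refl
    | tail _ hbc ih => exact Relation.ReflTransGen.head (G.adj_symm S hbc) ih

lemma exists_crossing {S : Set G.E} {C : Set G.V} {u v : G.V}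
    (h : G.ReachOn S u v) (hu : u ∈ C) (hv : v ∉ C) :
    ∃ e ∈ S, (G.src e ∈ C ∧ G.tgt e ∉ C) ∨ (G.tgt e ∈ C ∧ G.src e ∉ C) := by
  induction h with
  | refl => exact absurd hu hv
  | @tail b c hab hbc ih =>
    by_cases hb : b ∈ C
    · obtain ⟨e, he, h⟩ := hbc
      rcases h with ⟨h1, h2⟩ | ⟨h1, h2⟩
      · exact ⟨e, he, Or.inl ⟨h1 ▸ hb, h2 ▸ hv⟩⟩
      · exact ⟨e, he, Or.inr ⟨h2 ▸ hb, h1 ▸ hv⟩⟩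
    · exact ih hb

lemma two_crossing (hG : G.TwoEdgeConnected) {C : Set G.V} (hne : C.Nonempty)
    (hpr : C ≠ Set.univ) :
    ∃ e f : G.E, e ≠ f ∧
      ((G.src e ∈ C ∧ G.tgt e ∉ C) ∨ (G.tgt e ∈ C ∧ G.src e ∉ C)) ∧
      ((G.src f ∈ C ∧ G.tgt f ∉ C) ∨ (G.tgt f ∈ C ∧ G.src f ∉ C)) := by
  obtain ⟨u, hu⟩ := hne
  obtain ⟨v, hv⟩ : ∃ v, v ∉ C := by
    by_contra h; push_neg at h; exact hpr (Set.eq_univ_of_forall h)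
  obtain ⟨e, -, he⟩ := G.exists_crossing (hG.1.2 u v) hu hv
  have hre : G.ReachOn {f | f ≠ e} (G.src e) (G.tgt e) := not_not.mp (hG.2 e)
  rcases he with ⟨h1, h2⟩ | ⟨h1, h2⟩
  · obtain ⟨f, hf, hcf⟩ := G.exists_crossing hre h1 h2
    exact ⟨e, f, fun h => hf h.symm, Or.inl ⟨h1, h2⟩, hcf⟩
  · obtain ⟨f, hf, hcf⟩ := G.exists_crossing (G.reachOn_symm hre) h1 h2
    exact ⟨e, f, fun h => hf h.symm, Or.inr ⟨h1, h2⟩, hcf⟩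

end Multigraph


/-- Let `G` be a 2-edge-connected multigraph and `H` a proper
induced subgraph (given by a proper vertex set `W`). Let `k` be the number of
edges of `G` adjacent to `H` but not contained in `H`. Then `#l(H^Br) ≤ k`. -/
theorem leaves_of_induced_le_boundary
    (G : Multigraph) (hG : G.TwoEdgeConnected) (W : Set G.V) (hW : W ≠ Set.univ) :
    (G.induce W).Br.numLeaves ≤
      {e : G.E | (G.src e ∈ W ∨ G.tgt e ∈ W) ∧ ¬(G.src e ∈ W ∧ G.tgt e ∈ W)}.ncard := by
  classical
  set H := G.induce W with hH
  set B := H.Br with hB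
  set K := {e : G.E | (G.src e ∈ W ∨ G.tgt e ∈ W) ∧ ¬(G.src e ∈ W ∧ G.tgt e ∈ W)} with hK
  -- the quotient map
  let q : H.V → B.V := Quot.mk (H.ReachOn {e | ¬ H.IsBridge e})
  -- the vertex set in G of a component
  let Cset : B.V → Set G.V := fun c => {v | ∃ h : v ∈ W, q ⟨v, h⟩ = c}
  -- boundary edges attached to a component
  let bdry : B.V → Set G.E := fun c =>
    {e | (∃ h : G.src e ∈ W, G.tgt e ∉ W ∧ q ⟨G.src e, h⟩ = c) ∨
         (∃ h : G.tgt e ∈ W, G.src e ∉ W ∧ q ⟨G.tgt e, h⟩ = c)}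
  have h_sub : ∀ c, bdry c ⊆ K := by
    rintro c e (⟨h1, h2, -⟩ | ⟨h1, h2, -⟩)
    · exact ⟨Or.inl h1, fun h => h2 h.2⟩
    · exact ⟨Or.inr h1, fun h => h2 h.1⟩
  have h_disj : ∀ c c' e, e ∈ bdry c → e ∈ bdry c' → c = c' := by
    rintro c c' e (⟨h1, h2, h3⟩ | ⟨h1, h2, h3⟩) (⟨h1', h2', h3'⟩ | ⟨h1', h2', h3'⟩)
    · exact h3 ▸ h3' ▸ rfl
    · exact absurd h1 h2'
    · exact absurd h1' h2
    · exact h3 ▸ h3' ▸ rfl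
  -- every crossing edge is a boundary edge of c or a bridge incident to c
  have key : ∀ c : B.V, ∀ e : G.E,
      ((G.src e ∈ Cset c ∧ G.tgt e ∉ Cset c) ∨ (G.tgt e ∈ Cset c ∧ G.src e ∉ Cset c)) →
      e ∈ bdry c ∨ ∃ b : B.E, b.1.1 = e ∧ (B.src b = c ∨ B.tgt b = c) := by
    rintro c e (⟨⟨hs, hqs⟩, h2⟩ | ⟨⟨ht, hqt⟩, h2⟩)
    · by_cases htw : G.tgt e ∈ W
      · right
        have hbr : H.IsBridge ⟨e, hs, htw⟩ := by
          by_contra hnb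
          refine h2 ⟨htw, ?_⟩
          have hr : H.ReachOn {f | ¬ H.IsBridge f} ⟨G.src e, hs⟩ ⟨G.tgt e, htw⟩ :=
            Relation.ReflTransGen.single ⟨⟨e, hs, htw⟩, hnb, Or.inl ⟨rfl, rfl⟩⟩
          exact (Quot.sound hr).symm.trans hqs
        exact ⟨⟨⟨e, hs, htw⟩, hbr⟩, rfl, Or.inl hqs⟩
      · exact Or.inl (Or.inl ⟨hs, htw, hqs⟩)
    · by_cases hsw : G.src e ∈ W
      · right
        have hbr : H.IsBridge ⟨e, hsw, ht⟩ := by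
          by_contra hnb
          refine h2 ⟨hsw, ?_⟩
          have hr : H.ReachOn {f | ¬ H.IsBridge f} ⟨G.src e, hsw⟩ ⟨G.tgt e, ht⟩ :=
            Relation.ReflTransGen.single ⟨⟨e, hsw, ht⟩, hnb, Or.inl ⟨rfl, rfl⟩⟩
          exact (Quot.sound hr).trans hqt
        exact ⟨⟨⟨e, hsw, ht⟩, hbr⟩, rfl, Or.inr hqt⟩
      · exact Or.inl (Or.inr ⟨ht, hsw, hqt⟩)
  -- each component has at least two crossing edges
  have h_cross2 : ∀ c : B.V, ∃ e f : G.E, e ≠ f ∧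
      ((G.src e ∈ Cset c ∧ G.tgt e ∉ Cset c) ∨ (G.tgt e ∈ Cset c ∧ G.src e ∉ Cset c)) ∧
      ((G.src f ∈ Cset c ∧ G.tgt f ∉ Cset c) ∨ (G.tgt f ∈ Cset c ∧ G.src f ∉ Cset c)) := by
    intro c
    apply G.two_crossing hG
    · obtain ⟨⟨v, hv⟩, hx⟩ := Quot.exists_rep c
      exact ⟨v, hv, hx⟩
    · intro hu
      obtain ⟨v, hv⟩ : ∃ v, v ∉ W := by
        by_contra h; push_neg at h; exact hW (Set.eq_univ_of_forall h)
      have : v ∈ Cset c := hu ▸ Set.mem_univ v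
      exact hv this.choose
  have deg0 : ∀ c : B.V, B.degAt c = 0 → ∃ e f, e ≠ f ∧ e ∈ bdry c ∧ f ∈ bdry c := by
    intro c hc
    have hIb : {b : B.E | B.src b = c ∨ B.tgt b = c} = ∅ :=
      (Set.ncard_eq_zero (Set.toFinite _)).mp hc
    obtain ⟨e, f, hef, he, hf⟩ := h_cross2 c
    rcases key c e he with he' | ⟨b, -, hb⟩
    · rcases key c f hf with hf' | ⟨b, -, hb⟩
      · exact ⟨e, f, hef, he', hf'⟩
      · exact absurd (show b ∈ {b : B.E | B.src b = c ∨ B.tgt b = c} from hb)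
          (by rw [hIb]; exact Set.notMem_empty b)
    · exact absurd (show b ∈ {b : B.E | B.src b = c ∨ B.tgt b = c} from hb)
        (by rw [hIb]; exact Set.notMem_empty b)
  have deg1 : ∀ c : B.V, B.degAt c = 1 → ∃ e, e ∈ bdry c := by
    intro c hc
    obtain ⟨b0, hb0⟩ := Set.ncard_eq_one.mp hc
    obtain ⟨e, f, hef, he, hf⟩ := h_cross2 c
    rcases key c e he with he' | ⟨be, hbe, hbe'⟩
    · exact ⟨e, he'⟩
    rcases key c f hf with hf' | ⟨bf, hbf, hbf'⟩
    · exact ⟨f, hf'⟩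
    exfalso
    have h1 : be ∈ ({b0} : Set B.E) := hb0 ▸ hbe'
    have h2 : bf ∈ ({b0} : Set B.E) := hb0 ▸ hbf'
    apply hef
    rw [← hbe, ← hbf, h1, h2]
  -- counting
  choose e1 e2 hne12 h1m h2m using fun c : {c : B.V // B.degAt c = 0} => deg0 c.1 c.2
  choose e3 h3m using fun c : {c : B.V // B.degAt c = 1} => deg1 c.1 c.2
  let T := ({c : B.V // B.degAt c = 0} ⊕ {c : B.V // B.degAt c = 0}) ⊕ {c : B.V // B.degAt c = 1}
  have hcard : Nat.card T = B.numLeaves := by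
    rw [Multigraph.numLeaves]
    rw [Nat.card_sum, Nat.card_sum]
    rw [← Nat.card_coe_set_eq, ← Nat.card_coe_set_eq]
    ring_nf
    rfl
  have hf : ∃ f : T → K, Function.Injective f := by
    refine ⟨fun t => match t with
      | Sum.inl (Sum.inl c) => ⟨e1 c, h_sub c.1 (h1m c)⟩
      | Sum.inl (Sum.inr c) => ⟨e2 c, h_sub c.1 (h2m c)⟩
      | Sum.inr c => ⟨e3 c, h_sub c.1 (h3m c)⟩, ?_⟩
    rintro ((c | c) | c) ((d | d) | d) h <;>
      simp only [Subtype.mk.injEq] at h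
    · have := h_disj c.1 d.1 _ (h ▸ h1m c) (h1m d)
      exact congrArg _ (congrArg _ (Subtype.ext this))
    · have hcd : c = d := Subtype.ext (h_disj c.1 d.1 _ (h ▸ h1m c) (h2m d))
      subst hcd
      exact absurd h (hne12 c)
    · have hcd := h_disj c.1 d.1 _ (h ▸ h1m c) (h3m d)
      exact absurd (hcd ▸ d.2) (by simp [c.2, ← hcd])
    · have hcd : c = d := Subtype.ext (h_disj c.1 d.1 _ (h ▸ h2m c) (h1m d))
      subst hcd
      exact absurd h.symm (hne12 c)
    · have := h_disj c.1 d.1 _ (h ▸ h2m c) (h2m d)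
      exact congrArg _ (congrArg _ (Subtype.ext this))
    · have hcd := h_disj c.1 d.1 _ (h ▸ h2m c) (h3m d)
      exact absurd (hcd ▸ d.2) (by simp [c.2, ← hcd])
    · have hcd := h_disj c.1 d.1 _ (h ▸ h3m c) (h1m d)
      exact absurd (hcd ▸ d.2) (by simp [c.2, ← hcd])
    · have hcd := h_disj c.1 d.1 _ (h ▸ h3m c) (h2m d)
      exact absurd (hcd ▸ d.2) (by simp [c.2, ← hcd])
    · have := h_disj c.1 d.1 _ (h ▸ h3m c) (h3m d)
      exact congrArg _ (Subtype.ext this)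
  obtain ⟨f, hfinj⟩ := hf
  calc B.numLeaves = Nat.card T := hcard.symm
    _ ≤ Nat.card K := Nat.card_le_card_of_injective f hfinj
    _ = K.ncard := Nat.card_coe_set_eq K
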